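/- Let a₁,…,a_d, b be positive integers with each aᵢ coprime to b. Then for all t ∈ ℤ: S_{(a₁,…,a_d;b)}(t + a₁ + a₂ + ⋯ + a_d) = ∑_{k=0}^{d} (−1)^{d−k} ∑_{1≤i₁<⋯<i_k≤d} S_{(a_{i₁},…,a_{i_k};b)}(t), where the k = 0 term is (−1)^d S_b(t). -/

import Mathlib

noncomputable def xi (b : ℕ) : ℂ := Complex.exp (2 * Real.pi * Complex.I / b)

noncomputable def FDS (b : ℕ) {d : ℕ} (a : Fin d → ℕ) (s : Finset (Fin d)) (t : ℤ) : ℂ :=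
  (b : ℂ)⁻¹ * ∑ j ∈ Finset.Ico 1 b,
    xi b ^ ((j : ℤ) * t) / ∏ i ∈ s, (1 - xi b ^ ((j : ℤ) * (a i : ℤ)))

lemma xi_prim (b : ℕ) (hb : 0 < b) : IsPrimitiveRoot (xi b) b := by
  simpa [xi] using Complex.isPrimitiveRoot_exp b hb.ne'

lemma xi_ne_zero (b : ℕ) : xi b ≠ 0 := Complex.exp_ne_zero _

lemma zpow_sum' {ι : Type*} (z : ℂ) (hz : z ≠ 0) (s : Finset ι) (f : ι → ℤ) :
    z ^ (∑ i ∈ s, f i) = ∏ i ∈ s, z ^ f i := by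
  induction s using Finset.cons_induction with
  | empty => simp
  | cons i s hi ih => rw [Finset.sum_cons, Finset.prod_cons, zpow_add₀ hz, ih]

lemma one_sub_ne (b : ℕ) (hb : 0 < b) {j : ℕ} (hj : j ∈ Finset.Ico 1 b)
    {m : ℕ} (hcop : Nat.Coprime m b) :
    1 - xi b ^ ((j : ℤ) * (m : ℤ)) ≠ 0 := by
  rw [Finset.mem_Ico] at hj
  intro h
  have h1 : xi b ^ ((j : ℤ) * (m : ℤ)) = 1 := by linear_combination -h
  have h2 : ((b : ℤ)) ∣ (j : ℤ) * (m : ℤ) :=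
    ((xi_prim b hb).zpow_eq_one_iff_dvd _).mp h1
  have hd : b ∣ j * m := by exact_mod_cast h2
  have hbj : b ∣ j := Nat.Coprime.dvd_of_dvd_mul_right hcop.symm hd
  have := Nat.le_of_dvd (lt_of_lt_of_le Nat.zero_lt_one hj.1) hbj
  omega

/-- `S_{(a₁,…,a_d;b)}(t + a₁ + ⋯ + a_d) = ∑_{s ⊆ {1,…,d}} (−1)^{d−|s|} S_{(a_i : i ∈ s;b)}(t)`. -/
theorem stmt8 (d b : ℕ) (hb : 0 < b) (a : Fin d → ℕ)
    (hpos : ∀ i, 0 < a i) (hcop : ∀ i, Nat.Coprime (a i) b) (t : ℤ) :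
    FDS b a Finset.univ (t + ∑ i, (a i : ℤ)) =
      ∑ s ∈ (Finset.univ : Finset (Fin d)).powerset,
        (-1 : ℂ) ^ (d - s.card) * FDS b a s t := by
  have key : ∀ j ∈ Finset.Ico 1 b,
      xi b ^ ((j : ℤ) * (t + ∑ i, (a i : ℤ))) /
          ∏ i, (1 - xi b ^ ((j : ℤ) * (a i : ℤ)))
        = ∑ s ∈ (Finset.univ : Finset (Fin d)).powerset,
            (-1 : ℂ) ^ (d - s.card) *
              (xi b ^ ((j : ℤ) * t) / ∏ i ∈ s, (1 - xi b ^ ((j : ℤ) * (a i : ℤ)))) := by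
    intro j hj
    set x : Fin d → ℂ := fun i => xi b ^ ((j : ℤ) * (a i : ℤ)) with hx
    have hne : ∀ i, 1 - x i ≠ 0 := fun i => one_sub_ne b hb hj (hcop i)
    have hsplit : xi b ^ ((j : ℤ) * (t + ∑ i, (a i : ℤ)))
        = xi b ^ ((j : ℤ) * t) * ∏ i, x i := by
      have : (j : ℤ) * (t + ∑ i, (a i : ℤ)) = (j : ℤ) * t + ∑ i, (j : ℤ) * (a i : ℤ) := by
        rw [mul_add, Finset.mul_sum]
      rw [this, zpow_add₀ (xi_ne_zero b), zpow_sum' _ (xi_ne_zero b)]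
    have hprod : (∏ i, x i) / ∏ i, (1 - x i)
        = ∑ s ∈ (Finset.univ : Finset (Fin d)).powerset,
            (∏ i ∈ s, (1 - x i)⁻¹) * (-1 : ℂ) ^ (d - s.card) := by
      rw [div_eq_mul_inv, ← Finset.prod_inv_distrib, ← Finset.prod_mul_distrib]
      have : ∀ i : Fin d, x i * (1 - x i)⁻¹ = (1 - x i)⁻¹ + (-1) := by
        intro i
        field_simp [hne i]
        ring
      rw [Finset.prod_congr rfl fun i _ => this i, Finset.prod_add]
      refine Finset.sum_congr rfl fun s hs => ?_
      rw [Finset.prod_const]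
      congr 1
      rw [Finset.card_sdiff_of_subset (Finset.subset_univ s), Finset.card_univ, Fintype.card_fin]
    rw [hsplit, mul_div_assoc, hprod, Finset.mul_sum]
    refine Finset.sum_congr rfl fun s hs => ?_
    rw [Finset.prod_inv_distrib]
    field_simp
    ring
  unfold FDS
  rw [Finset.sum_congr rfl key]
  simp only [Finset.mul_sum]
  rw [Finset.sum_comm]
  exact Finset.sum_congr rfl fun s _ => Finset.sum_congr rfl fun j _ => by ring
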